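/- In the setting of the piecewise-affine conjugation φ, writing x_{n+1} = g_n(x_n) with g_n ∈ 𝒢, the conjugated action ρ satisfies ρ(g_{n+1}g_n)(n) = n+2 for every n ∈ ℤ, and consequently for every x ∈ ℝ, ρ(g_{n+1}g_n)(x) ≥ x + 1 where n = ⌊x⌋. -/

import Mathlib

open Set Filter

noncomputable section

/-- Writing `x_{n+1} = g_n (x_n)` with `g_n ∈ 𝒢`, the conjugated action
`ρ(g) = φ ∘ g ∘ φ⁻¹` satisfies `ρ(g_{n+1} g_n)(n) = n + 2` for every `n ∈ ℤ`, and hence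
`ρ(g_{n+1} g_n)(t) ≥ t + 1` for every real `t`, where `n = ⌊t⌋`. -/
theorem conjugated_action_uniform_advance
    (S : Finset (ℝ ≃ₜ ℝ)) (hne : S.Nonempty)
    (hmono : ∀ g ∈ S, Monotone ⇑g) (K : ℝ) (hK : 1 ≤ K)
    (hbil : ∀ g ∈ S, ∀ x y : ℝ, K⁻¹ * |y - x| ≤ |g y - g x| ∧ |g y - g x| ≤ K * |y - x|)
    (hsym : ∀ g ∈ S, g.symm ∈ S)
    (hnofix : ∀ p : ℝ, ∃ g ∈ S, g p ≠ p)
    (x : ℤ → ℝ) (hx0 : x 0 = 0)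
    (hxrec : ∀ n : ℤ, IsGreatest {y : ℝ | ∃ g ∈ S, y = g (x n)} (x (n + 1)))
    (φ : ℝ ≃ₜ ℝ)
    (hφ : ∀ n : ℤ, ∀ t ∈ Icc (x n) (x (n + 1)),
      φ t = (n : ℝ) + (t - x n) / (x (n + 1) - x n))
    (gseq : ℤ → (ℝ ≃ₜ ℝ)) (hgseq : ∀ n : ℤ, gseq n ∈ S ∧ gseq n (x n) = x (n + 1)) :
    (∀ n : ℤ, φ (gseq (n + 1) (gseq n (φ.symm (n : ℝ)))) = (n : ℝ) + 2) ∧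
    ∀ t : ℝ, t + 1 ≤ φ (gseq (⌊t⌋ + 1) (gseq ⌊t⌋ (φ.symm t))) := by
  -- x is strictly increasing step by step
  have hxlt : ∀ n : ℤ, x n < x (n + 1) := by
    intro n
    obtain ⟨g, hg, hgp⟩ := hnofix (x n)
    have hub := (hxrec n).2
    rcases lt_or_gt_of_ne hgp with h | h
    · -- g (x n) < x n, use g.symm
      have hs : g.symm ∈ S := hsym g hg
      have hsm : StrictMono ⇑g.symm :=
        (hmono _ hs).strictMono_of_injective g.symm.injective
      have : x n < g.symm (x n) := by
        have := hsm h
        simpa using this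
      exact lt_of_lt_of_le this (hub ⟨g.symm, hs, rfl⟩)
    · exact lt_of_lt_of_le h (hub ⟨g, hg, rfl⟩)
  have hxlt' : ∀ n : ℤ, x (n + 1) - x n ≠ 0 := fun n => sub_ne_zero.mpr (hxlt n).ne'
  -- φ at the nodes
  have hφn : ∀ n : ℤ, φ (x n) = (n : ℝ) := by
    intro n
    have := hφ n (x n) ⟨le_refl _, (hxlt n).le⟩
    simpa using this
  -- φ is strictly monotone
  have hφmono : StrictMono ⇑φ := by
    apply φ.continuous.strictMonoOn_of_inj_rigidity φ.injective (hxlt 0)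
    intro a ha b hb hab
    rw [hφ 0 a ha, hφ 0 b hb]
    have hpos : (0:ℝ) < x (0 + 1) - x 0 := sub_pos.mpr (hxlt 0)
    have : (a - x 0) / (x (0 + 1) - x 0) < (b - x 0) / (x (0 + 1) - x 0) := by
      gcongr
    linarith
  have hφsymm : ∀ n : ℤ, φ.symm (n : ℝ) = x n := by
    intro n
    rw [← hφn n, Homeomorph.symm_apply_apply]
  have hkey : ∀ n : ℤ, gseq (n + 1) (gseq n (x n)) = x (n + 2) := by
    intro n
    rw [(hgseq n).2, (hgseq (n + 1)).2]
    norm_num [add_assoc]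
  constructor
  · intro n
    rw [hφsymm n, hkey n]
    have := hφn (n + 2)
    push_cast at this
    rw [this]
  · intro t
    set n := ⌊t⌋ with hn
    have h1 : (n : ℝ) ≤ t := Int.floor_le t
    have h2 : t < (n : ℝ) + 1 := Int.lt_floor_add_one t
    have hsymmmono : StrictMono ⇑φ.symm := by
      intro a b hab
      by_contra h
      push_neg at h
      rcases eq_or_lt_of_le h with h | h
      · exact absurd (φ.symm.injective h) hab.ne'
      · exact absurd (hφmono h) (by simp [hab.le, not_lt])
    have hs1 : x n ≤ φ.symm t := by
      have := hsymmmono.monotone h1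
      rwa [hφsymm n] at this
    have hg1 : x (n + 1) ≤ gseq n (φ.symm t) := by
      have := hmono _ (hgseq n).1 hs1
      rwa [(hgseq n).2] at this
    have hg2 : x (n + 2) ≤ gseq (n + 1) (gseq n (φ.symm t)) := by
      have := hmono _ (hgseq (n + 1)).1 hg1
      rw [(hgseq (n + 1)).2] at this
      convert this using 2
      · rfl
      ring
    have := hφmono.monotone hg2
    rw [hφn (n + 2)] at this
    push_cast at this
    linarith
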